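/- For c ∈ ℝ with c > 0, let X_c be the two-point metric space {a₁,a₂} with d(a₁,a₂) = c. If 1/2 ≤ c₁ < c₂ ≤ 1, then ρ_GHu(X_{c₁}, X_{c₂}) ≥ 1/4. -/

import Mathlib

/-- The ultrametric Gromov–Hausdorff distance: infimum of Hausdorff distances between
isometric copies of `X` and `Y` inside a common ultrametric space. -/
noncomputable def GHuDist (X Y : Type*) [MetricSpace X] [MetricSpace Y] : ℝ :=
  sInf { r : ℝ | ∃ (Z : Type) (_ : MetricSpace Z), IsUltrametricDist Z ∧
    ∃ (i : X → Z) (j : Y → Z), Isometry i ∧ Isometry j ∧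
      Metric.hausdorffDist (Set.range i) (Set.range j) = r }

/-- In a two-point metric space, the strong triangle inequality holds. -/
lemma two_point_ultra {W : Type} [MetricSpace W] (w1 w2 : W)
    (htwo : ∀ w : W, w = w1 ∨ w = w2) (x y z : W) :
    dist x z ≤ max (dist x y) (dist y z) := by
  by_cases hxy : y = x
  · subst hxy; exact le_max_right _ _
  by_cases hyz : y = z
  · subst hyz; exact le_max_left _ _
  have hxz : x = z := by
    rcases htwo x with h1 | h1 <;> rcases htwo z with h2 | h2 <;>
      rcases htwo y with h3 | h3 <;> simp_all
  subst hxz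
  simp only [dist_self, le_max_iff]
  left; exact dist_nonneg

/-- Two-point spaces with distances c₁ ≠ c₂ in [1/2,1] are at ultrametric
Gromov–Hausdorff distance at least 1/4. -/
theorem GHuDist_two_point_spaces (X Y : Type) [MetricSpace X] [MetricSpace Y]
    (c1 c2 : ℝ)
    (a1 a2 : X) (ha : a1 ≠ a2) (hda : dist a1 a2 = c1) (hXtwo : ∀ x : X, x = a1 ∨ x = a2)
    (b1 b2 : Y) (hb : b1 ≠ b2) (hdb : dist b1 b2 = c2) (hYtwo : ∀ y : Y, y = b1 ∨ y = b2)
    (hc1 : 1/2 ≤ c1) (hlt : c1 < c2) (hc2 : c2 ≤ 1) :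
    1/4 ≤ GHuDist X Y := by
  classical
  have hc1le : c1 ≤ 1 := le_of_lt (lt_of_lt_of_le hlt hc2)
  have hXle : ∀ x x' : X, dist x x' ≤ 1 := by
    intro x x'
    rcases hXtwo x with h | h <;> rcases hXtwo x' with h' | h' <;> rw [h, h'] <;>
      first
        | simp
        | (rw [hda]; linarith)
        | (rw [dist_comm, hda]; linarith)
  have hYle : ∀ y y' : Y, dist y y' ≤ 1 := by
    intro y y'
    rcases hYtwo y with h | h <;> rcases hYtwo y' with h' | h' <;> rw [h, h'] <;>
      first
        | simp
        | (rw [hdb]; linarith)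
        | (rw [dist_comm, hdb]; linarith)
  unfold GHuDist
  apply le_csInf
  · -- nonemptiness: glue X and Y with cross distance 1
    let D : X ⊕ Y → X ⊕ Y → ℝ := fun p q =>
      Sum.elim (fun x => Sum.elim (dist x) (fun _ => 1) q)
               (fun y => Sum.elim (fun _ => 1) (dist y) q) p
    have hself : ∀ p, D p p = 0 := by rintro (x | y) <;> simp [D]
    have hcomm : ∀ p q, D p q = D q p := by
      rintro (x | y) (x' | y') <;> simp [D, dist_comm]
    have htri : ∀ p q r : X ⊕ Y, D p r ≤ D p q + D q r := by
      rintro (x | y) (x' | y') (x'' | y'')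
      · exact dist_triangle x x' x''
      · simp only [D, Sum.elim_inl, Sum.elim_inr]; linarith [dist_nonneg (x := x) (y := x')]
      · simp only [D, Sum.elim_inl, Sum.elim_inr]; linarith [hXle x x'']
      · simp only [D, Sum.elim_inl, Sum.elim_inr]; linarith [dist_nonneg (x := y') (y := y'')]
      · simp only [D, Sum.elim_inl, Sum.elim_inr]; linarith [dist_nonneg (x := x') (y := x'')]
      · simp only [D, Sum.elim_inl, Sum.elim_inr]; linarith [hYle y y'']
      · simp only [D, Sum.elim_inl, Sum.elim_inr]; linarith [dist_nonneg (x := y) (y := y')]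
      · exact dist_triangle y y' y''
    have heq : ∀ p q : X ⊕ Y, D p q = 0 → p = q := by
      rintro (x | y) (x' | y') h <;> simp only [D, Sum.elim_inl, Sum.elim_inr] at h
      · rw [eq_of_dist_eq_zero h]
      · norm_num at h
      · norm_num at h
      · rw [eq_of_dist_eq_zero h]
    letI MZ : MetricSpace (X ⊕ Y) :=
      { dist := D
        dist_self := hself
        dist_comm := hcomm
        dist_triangle := htri
        eq_of_dist_eq_zero := heq _ _ }
    have hult : IsUltrametricDist (X ⊕ Y) := by
      constructor
      rintro (x | y) (x' | y') (x'' | y'')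
      · exact two_point_ultra a1 a2 hXtwo x x' x''
      · exact le_max_right _ _
      · exact le_trans (hXle x x'') (by simp [dist]; left; exact le_of_eq rfl)
      · exact le_max_left _ _
      · exact le_max_left _ _
      · exact le_trans (hYle y y'') (by simp [dist]; left; exact le_of_eq rfl)
      · exact le_max_right _ _
      · exact two_point_ultra b1 b2 hYtwo y y' y''
    have hiso1 : Isometry (Sum.inl : X → X ⊕ Y) := Isometry.of_dist_eq fun _ _ => rfl
    have hiso2 : Isometry (Sum.inr : Y → X ⊕ Y) := Isometry.of_dist_eq fun _ _ => rfl
    exact ⟨_, X ⊕ Y, MZ, hult, Sum.inl, Sum.inr, hiso1, hiso2, rfl⟩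
  · rintro r ⟨Z, _, hU, i, j, hi, hj, hr⟩
    by_contra hlt4
    push_neg at hlt4
    have hAfin : (Set.range i).Finite := by
      have hsub : Set.range i ⊆ {i a1, i a2} := by
        rintro _ ⟨x, rfl⟩
        rcases hXtwo x with rfl | rfl <;> simp
      exact Set.Finite.subset (by simp) hsub
    have hBfin : (Set.range j).Finite := by
      have hsub : Set.range j ⊆ {j b1, j b2} := by
        rintro _ ⟨y, rfl⟩
        rcases hYtwo y with rfl | rfl <;> simp
      exact Set.Finite.subset (by simp) hsub
    have hfin : EMetric.hausdorffEdist (Set.range i) (Set.range j) ≠ ⊤ :=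
      Metric.hausdorffEdist_ne_top_of_nonempty_of_bounded
        ⟨i a1, Set.mem_range_self _⟩ ⟨j b1, Set.mem_range_self _⟩
        hAfin.isBounded hBfin.isBounded
    have hH : Metric.hausdorffDist (Set.range i) (Set.range j) < 1/4 := hr ▸ hlt4
    obtain ⟨p1, hp1B, hd1⟩ :=
      Metric.exists_dist_lt_of_hausdorffDist_lt (Set.mem_range_self a1) hH hfin
    obtain ⟨p2, hp2B, hd2⟩ :=
      Metric.exists_dist_lt_of_hausdorffDist_lt (Set.mem_range_self a2) hH hfin
    obtain ⟨y1, rfl⟩ := hp1B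
    obtain ⟨y2, rfl⟩ := hp2B
    have hia : dist (i a1) (i a2) = c1 := by rw [hi.dist_eq, hda]
    rcases eq_or_ne y1 y2 with rfl | hy
    · have htm := hU.dist_triangle_max (i a1) (j y1) (i a2)
      rw [hia] at htm
      have h2 : dist (j y1) (i a2) < 1/4 := by rw [dist_comm]; exact hd2
      have : c1 < 1/4 := lt_of_le_of_lt htm (max_lt hd1 h2)
      linarith
    · have hjc : dist (j y1) (j y2) = c2 := by
        rw [hj.dist_eq]
        rcases hYtwo y1 with h | h <;> rcases hYtwo y2 with h' | h' <;> rw [h, h'] at hy ⊢ <;>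
          first
            | exact absurd rfl hy
            | exact hdb
            | (rw [dist_comm]; exact hdb)
      have h1 : dist (j y1) (j y2) ≤ max (dist (j y1) (i a1)) (dist (i a1) (j y2)) :=
        hU.dist_triangle_max _ _ _
      have h2 : dist (i a1) (j y2) ≤ max (dist (i a1) (i a2)) (dist (i a2) (j y2)) :=
        hU.dist_triangle_max _ _ _
      rw [hjc] at h1
      rw [hia] at h2
      have h3 : dist (j y1) (i a1) < 1/4 := by rw [dist_comm]; exact hd1
      have h4 : dist (i a1) (j y2) ≤ c1 := le_trans h2 (max_le le_rfl (by linarith))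
      have : c2 ≤ c1 := le_trans h1 (max_le (by linarith) h4)
      linarith
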